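/- Fix a natural number m ≥ 1 and let H = {x ∈ ℝ^{m+1} : Σ_{i=0}^{m} x_i = 0}, equipped with the inner product inherited from the standard Euclidean inner product on ℝ^{m+1}. For a linear isometry A of H onto itself, the following are equivalent: (a) Σ_{i=0}^{m} ((A x)_i)^3 = Σ_{i=0}^{m} x_i^3 for every x ∈ H; (b) there exists a permutation σ of {0,…,m} such that (A x)_i = x_{σ(i)} for every x ∈ H and every index i. Consequently, the group of linear isometries of H preserving the cubic form x ↦ Σ_{i=0}^{m} x_i^3 is isomorphic to the symmetric group S_{m+1}. -/

import Mathlib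

open scoped RealInnerProductSpace


open scoped BigOperators

noncomputable section

/-- The hyperplane `{x ∈ ℝ^{m+1} : ∑ xᵢ = 0}`, as a submodule of Euclidean space
(hence inheriting the standard inner product). -/
def zeroSumHyperplane (m : ℕ) : Submodule ℝ (EuclideanSpace ℝ (Fin (m + 1))) where
  carrier := {x | ∑ i, x i = 0}
  add_mem' := by
    intro a b ha hb
    simp only [Set.mem_setOf_eq, PiLp.add_apply] at *
    rw [Finset.sum_add_distrib, ha, hb, add_zero]
  zero_mem' := by
    simp only [Set.mem_setOf_eq, PiLp.zero_apply, Finset.sum_const_zero]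
  smul_mem' := by
    intro c a ha
    simp only [Set.mem_setOf_eq, PiLp.smul_apply, smul_eq_mul] at *
    rw [← Finset.mul_sum, ha, mul_zero]

/-- The group of linear isometries of the zero-sum hyperplane preserving the cubic form
`x ↦ ∑ xᵢ³`. -/
def cubicPreserving (m : ℕ) :
    Subgroup ((zeroSumHyperplane m) ≃ₗᵢ[ℝ] (zeroSumHyperplane m)) where
  carrier := {A | ∀ x : zeroSumHyperplane m,
    ∑ i, ((A x : EuclideanSpace ℝ (Fin (m + 1))) i) ^ 3
      = ∑ i, ((x : EuclideanSpace ℝ (Fin (m + 1))) i) ^ 3}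
  one_mem' := by intro x; rfl
  mul_mem' := by
    intro A B hA hB x
    exact (hA (B x)).trans (hB x)
  inv_mem' := by
    intro A hA x
    have h := hA (A.symm x)
    rw [LinearIsometryEquiv.apply_symm_apply] at h
    exact h.symm

namespace CubicAux

variable {m : ℕ}

abbrev E (m : ℕ) := EuclideanSpace ℝ (Fin (m+1))
abbrev H (m : ℕ) := zeroSumHyperplane m

lemma mem_zsh {x : E m} : x ∈ zeroSumHyperplane m ↔ ∑ i, x i = 0 := Iff.rfl

lemma sum_eq_zero (x : H m) : ∑ i, (x : E m) i = 0 := x.2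

/-- simplex vertex vectors -/
def wv (m : ℕ) (i : Fin (m+1)) : E m :=
  WithLp.toLp 2 (fun j => (if i = j then (1:ℝ) else 0) - 1/((m:ℝ)+1))

lemma wv_mem (m : ℕ) (i : Fin (m+1)) : wv m i ∈ zeroSumHyperplane m := by
  rw [mem_zsh]
  have : (m+1 : ℝ) ≠ 0 := by positivity
  simp [wv, Finset.sum_sub_distrib, Finset.sum_ite_eq, Finset.card_univ]
  field_simp
  ring

/-- as an element of H -/
def w (m : ℕ) (i : Fin (m+1)) : H m := ⟨wv m i, wv_mem m i⟩

lemma wv_apply (i j : Fin (m+1)) :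
    wv m i j = (if i = j then (1:ℝ) else 0) - 1/(m+1) := rfl

lemma wv_inj {i i' : Fin (m+1)} (h : wv m i = wv m i') : i = i' := by
  by_contra hne
  have := congrArg (fun v : E m => v i) h
  simp [wv, hne, Ne.symm hne] at this

lemma inner_euc (x y : E m) : ⟪x, y⟫ = ∑ i, x i * y i := by
  simp [PiLp.inner_apply, RCLike.inner_apply]
  exact Finset.sum_congr rfl fun _ _ => mul_comm _ _

lemma inner_H (x y : H m) : ⟪x, y⟫ = ∑ i, (x : E m) i * (y : E m) i := by
  rw [Submodule.coe_inner]; exact inner_euc _ _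

/-- coordinates via inner product with wv -/
lemma coord_eq_inner (x : H m) (j : Fin (m+1)) : ⟪x, w m j⟫ = (x : E m) j := by
  rw [inner_H]
  have h0 : ∑ i, (x : E m) i = 0 := sum_eq_zero x
  have : ∀ i, (x : E m) i * (w m j : E m) i
      = (if j = i then (x : E m) i else 0) - (x : E m) i * (1/(m+1)) := by
    intro i
    rw [show (w m j : E m) i = wv m j i from rfl, wv_apply]
    by_cases h : j = i <;> simp [h] <;> ring
  rw [Finset.sum_congr rfl (fun i _ => this i), Finset.sum_sub_distrib,
    Finset.sum_ite_eq, ← Finset.sum_mul, h0]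
  simp

lemma sum_sq (x : H m) : ∑ i, (x : E m) i ^ 2 = ‖x‖^2 := by
  rw [← real_inner_self_eq_norm_sq, inner_H]
  exact Finset.sum_congr rfl (fun i _ => pow_two _)

lemma wv_sum_sq (i : Fin (m+1)) : ∑ j, (wv m i) j ^ 2 = (m : ℝ)/(m+1) := by
  have h : (m+1 : ℝ) ≠ 0 := by positivity
  have : ∀ j, (wv m i) j ^ 2 = (if i = j then ((1:ℝ) - 2/(m+1)) else 0) + 1/((m:ℝ)+1)^2 := by
    intro j
    rw [wv_apply]
    by_cases hij : i = j <;> simp [hij] <;> field_simp <;> ring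
  rw [Finset.sum_congr rfl (fun j _ => this j), Finset.sum_add_distrib,
    Finset.sum_ite_eq]
  simp [Finset.card_univ]
  field_simp
  ring

/-- eigen-identity for wv -/
lemma wv_quad (i j : Fin (m+1)) :
    (wv m i) j ^ 2 - (m : ℝ)/(m+1)^2 = ((m - 1 : ℝ)/(m+1)) * (wv m i) j := by
  have h : (m+1 : ℝ) ≠ 0 := by positivity
  rw [wv_apply]
  by_cases hij : i = j
  · simp only [hij, if_true]
    field_simp
    ring
  · simp only [hij, if_false]
    field_simp
    ring_nf

/-- classification of solutions -/
lemma classify (x : H m) (hs : ∑ k, (x : E m) k ^ 2 = (m : ℝ)/(m+1))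
    (hq : ∀ j, (x : E m) j ^ 2 - (m : ℝ)/(m+1)^2 = ((m - 1 : ℝ)/(m+1)) * (x : E m) j) :
    ∃ i, x = w m i := by
  have h : ((m:ℝ)+1) ≠ 0 := by positivity
  have hroot : ∀ j, (x : E m) j = (m:ℝ)/(m+1) ∨ (x : E m) j = -1/((m:ℝ)+1) := by
    intro j
    have h2 := hq j
    have factored : (((m:ℝ)+1) * ((x : E m) j) - m) * ((((m:ℝ)+1)) * ((x : E m) j) + 1) = 0 := by
      have factored' : ((((m:ℝ)+1) * ((x : E m) j) - m) * ((((m:ℝ)+1)) * ((x : E m) j) + 1)) * ((m:ℝ)+1) = 0 := by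
        field_simp at h2
        linear_combination ((m:ℝ)+1) * h2
      exact (mul_eq_zero.mp factored').resolve_right h
    rcases mul_eq_zero.mp factored with h1 | h1
    · left
      field_simp
      linear_combination h1
    · right
      field_simp
      linear_combination h1
  classical
  set T := Finset.univ.filter (fun j => (x : E m) j = (m:ℝ)/(m+1)) with hT
  have hsum := sum_eq_zero x
  have hsplit := Finset.sum_filter_add_sum_filter_not Finset.univ
    (fun j => (x : E m) j = (m:ℝ)/(m+1)) (fun j => (x : E m) j)
  have h1 : ∑ j ∈ T, (x : E m) j = (T.card : ℝ) * ((m:ℝ)/(m+1)) := by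
    rw [Finset.sum_congr rfl (fun j hj => (Finset.mem_filter.mp hj).2),
      Finset.sum_const, nsmul_eq_mul]
  set T' := Finset.univ.filter (fun j => ¬ (x : E m) j = (m:ℝ)/(m+1)) with hT'
  have h2 : ∑ j ∈ T', (x : E m) j = (T'.card : ℝ) * (-1/((m:ℝ)+1)) := by
    rw [Finset.sum_congr rfl (fun j hj => ((hroot j).resolve_left (Finset.mem_filter.mp hj).2)),
      Finset.sum_const, nsmul_eq_mul]
  have hcards : T.card + T'.card = m + 1 := by
    have := Finset.card_filter_add_card_filter_not (s := (Finset.univ : Finset (Fin (m+1))))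
      (p := fun j => (x : E m) j = (m:ℝ)/(m+1))
    simpa [Finset.card_univ] using this
  have hcard : T.card = 1 := by
    have hre : (T.card : ℝ) * ((m:ℝ)/(m+1)) + (T'.card : ℝ) * (-1/((m:ℝ)+1)) = 0 := by
      rw [← h1, ← h2, hsplit]; exact hsum
    have hc2 : (T'.card : ℝ) = (m:ℝ) + 1 - T.card := by
      have : (T.card : ℝ) + (T'.card : ℝ) = (m:ℝ) + 1 := by
        exact_mod_cast congrArg (Nat.cast (R := ℝ)) hcards
      linarith
    rw [hc2] at hre
    have : (T.card : ℝ) = 1 := by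
      field_simp at hre
      nlinarith [hre]
    exact_mod_cast this
  obtain ⟨i, hi⟩ := Finset.card_eq_one.mp hcard
  refine ⟨i, Subtype.ext (PiLp.ext fun j => ?_)⟩
  show (x : E m) j = wv m i j
  rw [wv_apply]
  by_cases hji : i = j
  · subst hji
    have : i ∈ T := hi ▸ Finset.mem_singleton_self i
    rw [(Finset.mem_filter.mp this).2, if_pos rfl, eq_sub_iff_add_eq, ← add_div]
    exact div_self h
  · have hjT : j ∉ T := by
      rw [hi, Finset.mem_singleton]
      exact fun hc => hji hc.symm
    have : ¬ (x : E m) j = (m:ℝ)/(m+1) := fun hc => hjT (Finset.mem_filter.mpr ⟨Finset.mem_univ _, hc⟩)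
    have := (hroot j).resolve_left this
    rw [this, if_neg hji]
    ring

lemma coe_add (u v : H m) (j : Fin (m+1)) :
    ((u + v : H m) : E m) j = (u : E m) j + (v : E m) j := rfl

lemma coe_sub (u v : H m) (j : Fin (m+1)) :
    ((u - v : H m) : E m) j = (u : E m) j - (v : E m) j := by
  rw [AddSubgroupClass.coe_sub]; rfl

lemma coe_smul (c : ℝ) (u : H m) (j : Fin (m+1)) :
    ((c • u : H m) : E m) j = c * (u : E m) j := rfl

lemma div_sq_id (m : ℕ) : ((m:ℝ)/(m+1))/((m:ℝ)+1) = (m:ℝ)/((m:ℝ)+1)^2 := by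
  rw [div_div, ← sq]

section
variable (A : H m ≃ₗᵢ[ℝ] H m)

lemma sq_lin (hA : ∀ x : H m, ∑ i, ((A x : E m) i)^3 = ∑ i, ((x : E m) i)^3)
    (x y : H m) :
    ∑ j, (A x : E m) j ^ 2 * (A y : E m) j = ∑ j, (x : E m) j ^ 2 * (y : E m) j := by
  have key : ∀ a b : Fin (m+1) → ℝ, (6:ℝ) * ∑ j, a j ^ 2 * b j
      = ∑ j, ((a j + b j) ^ 3 - (a j - b j) ^ 3 - 2 * b j ^ 3) := by
    intro a b
    rw [Finset.mul_sum]
    exact Finset.sum_congr rfl (fun j _ => by ring)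
  have h1 := hA (x + y)
  have h2 := hA (x - y)
  have h3 := hA y
  have e1 : ∀ j, ((A (x+y)) : E m) j = (A x : E m) j + (A y : E m) j := by
    intro j; rw [map_add, coe_add]
  have e2 : ∀ j, ((A (x-y)) : E m) j = (A x : E m) j - (A y : E m) j := by
    intro j; rw [map_sub, coe_sub]
  have c1 : ∑ i, ((x + y : H m) : E m) i ^ 3 = ∑ i, ((x : E m) i + (y : E m) i) ^ 3 :=
    Finset.sum_congr rfl (fun j _ => by rw [coe_add])
  have c2 : ∑ i, ((x - y : H m) : E m) i ^ 3 = ∑ i, ((x : E m) i - (y : E m) i) ^ 3 :=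
    Finset.sum_congr rfl (fun j _ => by rw [coe_sub])
  rw [Finset.sum_congr rfl (fun j _ => by rw [e1 j]), c1] at h1
  rw [Finset.sum_congr rfl (fun j _ => by rw [e2 j]), c2] at h2
  have k1 := key (fun j => (A x : E m) j) (fun j => (A y : E m) j)
  have k2 := key (fun j => (x : E m) j) (fun j => (y : E m) j)
  simp only [Finset.sum_sub_distrib, ← Finset.mul_sum] at k1 k2
  have : (6:ℝ) * ∑ j, (A x : E m) j ^ 2 * (A y : E m) j
      = (6:ℝ) * ∑ j, (x : E m) j ^ 2 * (y : E m) j := by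
    rw [k1, k2, h1, h2, h3]
  linarith

/-- the quadratic map `x ↦ x² - ‖x‖²/n` -/
def qv (x : H m) : H m :=
  ⟨WithLp.toLp 2 (fun j => (x : E m) j ^ 2 - (∑ k, (x : E m) k ^ 2)/(m+1) : Fin (m+1) → ℝ), by
    rw [mem_zsh]
    have h : ((m:ℝ)+1) ≠ 0 := by positivity
    show ∑ j, ((x : E m) j ^ 2 - (∑ k, (x : E m) k ^ 2)/(m+1)) = 0
    rw [Finset.sum_sub_distrib, Finset.sum_const, Finset.card_univ, nsmul_eq_mul]
    simp only [Fintype.card_fin]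
    push_cast
    field_simp
    ring⟩

lemma qv_apply (x : H m) (j : Fin (m+1)) :
    (qv x : E m) j = (x : E m) j ^ 2 - (∑ k, (x : E m) k ^ 2)/(m+1) := rfl

lemma inner_qv (x z : H m) : ⟪qv x, z⟫ = ∑ j, (x : E m) j ^ 2 * (z : E m) j := by
  rw [inner_H]
  have : ∀ j, (qv x : E m) j * (z : E m) j
      = (x : E m) j ^ 2 * (z : E m) j
        - ((∑ k, (x : E m) k ^ 2)/(m+1)) * (z : E m) j := by
    intro j; rw [qv_apply]; ring
  rw [Finset.sum_congr rfl (fun j _ => this j), Finset.sum_sub_distrib, ← Finset.mul_sum,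
    sum_eq_zero z, mul_zero, sub_zero]

lemma qcomm (hA : ∀ x : H m, ∑ i, ((A x : E m) i)^3 = ∑ i, ((x : E m) i)^3)
    (x : H m) : qv (A x) = A (qv x) := by
  have hz : ∀ z : H m, ⟪qv (A x) - A (qv x), z⟫ = 0 := by
    intro z
    rw [inner_sub_left, inner_qv]
    have h1 : ⟪A (qv x), z⟫ = ⟪qv x, A.symm z⟫ := by
      rw [← A.inner_map_map (qv x) (A.symm z), A.apply_symm_apply]
    rw [h1, inner_qv]
    have h2 := sq_lin A hA x (A.symm z)
    rw [A.apply_symm_apply] at h2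
    rw [h2, sub_self]
  have := hz (qv (A x) - A (qv x))
  rwa [inner_self_eq_zero, sub_eq_zero] at this

lemma exists_perm (hA : ∀ x : H m, ∑ i, ((A x : E m) i)^3 = ∑ i, ((x : E m) i)^3) :
    ∃ σ : Equiv.Perm (Fin (m+1)), ∀ (x : H m) (i : Fin (m+1)),
      (A x : E m) i = (x : E m) (σ i) := by
  classical
  have himg : ∀ i, ∃ k, A (w m i) = w m k := by
    intro i
    have hnorm : ∑ k, ((A (w m i)) : E m) k ^ 2 = (m:ℝ)/(m+1) := by
      rw [sum_sq, A.norm_map, ← sum_sq]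
      exact wv_sum_sq i
    have hqw : qv (w m i) = ((m - 1 : ℝ)/(m+1)) • (w m i) := by
      apply Subtype.ext; apply PiLp.ext; intro j
      rw [show ((((m - 1 : ℝ)/(m+1)) • (w m i) : H m) : E m) j
          = ((m - 1 : ℝ)/(m+1)) * (w m i : E m) j from coe_smul _ _ _]
      rw [qv_apply, show ∑ k, (w m i : E m) k ^ 2 = (m:ℝ)/(m+1) from wv_sum_sq i,
        div_sq_id]
      exact wv_quad i j
    have hqu : qv (A (w m i)) = ((m-1:ℝ)/(m+1)) • (A (w m i)) := by
      rw [qcomm A hA, hqw, map_smul]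
    have hq : ∀ j, ((A (w m i)) : E m) j ^ 2 - (m:ℝ)/(m+1)^2
        = ((m-1:ℝ)/(m+1)) * ((A (w m i)) : E m) j := by
      intro j
      have := congrArg (fun v : H m => (v : E m) j) hqu
      simp only [qv_apply, coe_smul] at this
      rwa [hnorm, div_sq_id] at this
    exact classify _ hnorm hq
  choose f hf using himg
  have hfinj : Function.Injective f := by
    intro i i' hii
    have h1 : A (w m i) = A (w m i') := by rw [hf i, hf i', hii]
    exact wv_inj (congrArg Subtype.val (A.injective h1))
  let τ := Equiv.ofBijective f (Finite.injective_iff_bijective.mp hfinj)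
  refine ⟨τ.symm, fun x j => ?_⟩
  have hAsymm : A.symm (w m j) = w m (τ.symm j) := by
    apply A.injective
    rw [A.apply_symm_apply, hf (τ.symm j)]
    have : f (τ.symm j) = j := τ.apply_symm_apply j
    rw [this]
  calc (A x : E m) j = ⟪A x, w m j⟫ := (coord_eq_inner _ _).symm
    _ = ⟪x, A.symm (w m j)⟫ := by
        rw [← A.inner_map_map x (A.symm (w m j)), A.apply_symm_apply]
    _ = ⟪x, w m (τ.symm j)⟫ := by rw [hAsymm]
    _ = (x : E m) (τ.symm j) := coord_eq_inner _ _

end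

lemma sum_comp_zero (σ : Equiv.Perm (Fin (m+1))) (x : H m) :
    ∑ j, (x : E m) (σ j) = 0 := by
  rw [Equiv.sum_comp σ (fun k => (x : E m) k)]
  exact sum_eq_zero x

/-- the linear equivalence induced by a permutation -/
def permLin (σ : Equiv.Perm (Fin (m+1))) : H m ≃ₗ[ℝ] H m where
  toFun x := ⟨WithLp.toLp 2 (fun j => (x : E m) (σ j) : Fin (m+1) → ℝ), (mem_zsh).mpr (sum_comp_zero σ x)⟩
  invFun x := ⟨WithLp.toLp 2 (fun j => (x : E m) (σ⁻¹ j) : Fin (m+1) → ℝ), (mem_zsh).mpr (sum_comp_zero σ⁻¹ x)⟩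
  left_inv x := by
    apply Subtype.ext; apply PiLp.ext; intro j
    show (x : E m) (σ (σ⁻¹ j)) = (x : E m) j
    rw [Equiv.Perm.inv_def, Equiv.apply_symm_apply]
  right_inv x := by
    apply Subtype.ext; apply PiLp.ext; intro j
    show (x : E m) (σ⁻¹ (σ j)) = (x : E m) j
    rw [Equiv.Perm.inv_def, Equiv.symm_apply_apply]
  map_add' x y := by
    apply Subtype.ext; apply PiLp.ext; intro j
    show ((x + y : H m) : E m) (σ j) = _
    rw [coe_add]; rfl
  map_smul' c x := by
    apply Subtype.ext; apply PiLp.ext; intro j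
    show ((c • x : H m) : E m) (σ j) = _
    rw [coe_smul]; rfl

/-- the linear isometry induced by a permutation -/
def permIso (σ : Equiv.Perm (Fin (m+1))) : H m ≃ₗᵢ[ℝ] H m :=
  (permLin σ).isometryOfInner (by
    intro x y
    rw [inner_H, inner_H]
    show ∑ j, (x : E m) (σ j) * (y : E m) (σ j) = _
    exact Equiv.sum_comp σ (fun k => (x : E m) k * (y : E m) k))

lemma permIso_apply (σ : Equiv.Perm (Fin (m+1))) (x : H m) (j : Fin (m+1)) :
    (permIso σ x : E m) j = (x : E m) (σ j) := rfl

lemma permIso_cubic (σ : Equiv.Perm (Fin (m+1))) (x : H m) :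
    ∑ i, (permIso σ x : E m) i ^ 3 = ∑ i, (x : E m) i ^ 3 := by
  rw [Finset.sum_congr rfl (fun j _ => by rw [permIso_apply])]
  exact Equiv.sum_comp σ (fun k => (x : E m) k ^ 3)

lemma permIso_mem (σ : Equiv.Perm (Fin (m+1))) : permIso σ ∈ cubicPreserving m :=
  fun x => permIso_cubic σ x

lemma permIso_w (σ : Equiv.Perm (Fin (m+1))) (i : Fin (m+1)) :
    permIso σ (w m i) = w m (σ⁻¹ i) := by
  apply Subtype.ext; apply PiLp.ext; intro j
  rw [permIso_apply]
  show wv m i (σ j) = wv m (σ⁻¹ i) j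
  rw [wv_apply, wv_apply]
  congr 1
  by_cases hij : i = σ j
  · rw [if_pos hij, if_pos (by rw [hij, Equiv.Perm.inv_def, Equiv.symm_apply_apply])]
  · rw [if_neg hij, if_neg (fun hc => hij (by rw [← hc, Equiv.Perm.inv_def, Equiv.apply_symm_apply]))]

/-- the monoid hom from the symmetric group -/
def permHom (m : ℕ) : Equiv.Perm (Fin (m+1)) →* cubicPreserving m where
  toFun σ := ⟨permIso σ⁻¹, permIso_mem σ⁻¹⟩
  map_one' := by
    apply Subtype.ext
    apply LinearIsometryEquiv.ext
    intro x
    apply Subtype.ext; apply PiLp.ext; intro j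
    rfl
  map_mul' σ τ := by
    apply Subtype.ext
    apply LinearIsometryEquiv.ext
    intro x
    apply Subtype.ext; apply PiLp.ext; intro j
    show (x : E m) ((σ * τ)⁻¹ j) = (x : E m) (τ⁻¹ (σ⁻¹ j))
    rw [mul_inv_rev]
    rfl

lemma permHom_bijective (m : ℕ) : Function.Bijective (permHom m) := by
  constructor
  · intro σ τ hst
    have h1 : (permIso σ⁻¹ : H m ≃ₗᵢ[ℝ] H m) = permIso τ⁻¹ := congrArg Subtype.val hst
    ext i
    have h2 : permIso σ⁻¹ (w m i) = permIso τ⁻¹ (w m i) := by rw [h1]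
    rw [permIso_w, permIso_w, inv_inv, inv_inv] at h2
    exact congrArg Fin.val (wv_inj (congrArg Subtype.val h2))
  · intro B
    obtain ⟨σ, hσ⟩ := exists_perm (B : H m ≃ₗᵢ[ℝ] H m) B.2
    refine ⟨σ⁻¹, Subtype.ext ?_⟩
    show permIso σ⁻¹⁻¹ = (B : H m ≃ₗᵢ[ℝ] H m)
    rw [inv_inv]
    apply LinearIsometryEquiv.ext
    intro x
    apply Subtype.ext; apply PiLp.ext; intro j
    rw [permIso_apply]
    exact (hσ x j).symm

end CubicAux

/-- a linear isometry of the zero-sum hyperplane preserves the cubic form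
`x ↦ ∑ xᵢ³` iff it is induced by a permutation of the `m+1` coordinates; consequently the
group of such isometries is isomorphic to `S_{m+1}`. -/
theorem cubic_preserving_isometries_eq_symmetricGroup (m : ℕ) (hm : 1 ≤ m) :
    (∀ A : (zeroSumHyperplane m) ≃ₗᵢ[ℝ] (zeroSumHyperplane m),
      (∀ x : zeroSumHyperplane m,
        ∑ i, ((A x : EuclideanSpace ℝ (Fin (m + 1))) i) ^ 3
          = ∑ i, ((x : EuclideanSpace ℝ (Fin (m + 1))) i) ^ 3)
      ↔ (∃ σ : Equiv.Perm (Fin (m + 1)), ∀ (x : zeroSumHyperplane m) (i : Fin (m + 1)),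
          (A x : EuclideanSpace ℝ (Fin (m + 1))) i
            = (x : EuclideanSpace ℝ (Fin (m + 1))) (σ i))) ∧
    Nonempty (cubicPreserving m ≃* Equiv.Perm (Fin (m + 1))) := by
  constructor
  · intro A
    constructor
    · intro hA
      exact CubicAux.exists_perm A hA
    · rintro ⟨σ, hσ⟩ x
      rw [Finset.sum_congr rfl (fun i _ => by rw [hσ x i])]
      exact Equiv.sum_comp σ (fun k => (x : EuclideanSpace ℝ (Fin (m+1))) k ^ 3)
  · exact ⟨(MulEquiv.ofBijective (CubicAux.permHom m) (CubicAux.permHom_bijective m)).symm⟩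

end
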